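/- Let A = R[x,y]/(xy - t^l) and let E_{i,j} = A⟨ξ₁,ξ₂⟩/(t^j ξ₁ - x ξ₂, t^i ξ₂ - y ξ₁) with i+j = l, i,j > 0. Then the localization of E_{i,j} at x (i.e., E_{i,j} ⊗_A A[x^{-1}]) is a free A[x^{-1}]-module of rank 1 generated by the image of ξ₁, with ξ₂ = t^j ξ₁ / x. -/

import Mathlib

set_option synthInstance.maxHeartbeats 1000000
set_option maxHeartbeats 1000000

open MvPolynomial

namespace stmt11

variable (R : Type*) [CommRing R] (t : R) (l : ℕ)

/-- `A = R[x,y]/(xy - t^l)`, with `x = X 0`, `y = X 1`. -/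
noncomputable abbrev A := MvPolynomial (Fin 2) R ⧸
  Ideal.span {(X 0 * X 1 - C (t ^ l) : MvPolynomial (Fin 2) R)}

noncomputable def x : A R t l := Ideal.Quotient.mk _ (X 0)
noncomputable def y : A R t l := Ideal.Quotient.mk _ (X 1)
noncomputable def tA : A R t l := Ideal.Quotient.mk _ (C t)

/-- `E i j` is the `A`-module with generators `ξ₁, ξ₂` and relations
`t^j ξ₁ = x ξ₂` and `t^i ξ₂ = y ξ₁`. -/
noncomputable def E (i j : ℕ) :=
  (A R t l × A R t l) ⧸
    (Submodule.span (A R t l) {((tA R t l ^ j, -(x R t l)) : A R t l × A R t l),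
      ((y R t l, -(tA R t l ^ i)) : A R t l × A R t l)})

noncomputable instance (i j : ℕ) : AddCommGroup (E R t l i j) :=
  Submodule.Quotient.addCommGroup _

noncomputable instance (i j : ℕ) : Module (A R t l) (E R t l i j) :=
  Submodule.Quotient.module _

/-- `ξ₁` -/
noncomputable def ξ₁ (i j : ℕ) : E R t l i j := Submodule.Quotient.mk (1, 0)
/-- `ξ₂` -/
noncomputable def ξ₂ (i j : ℕ) : E R t l i j := Submodule.Quotient.mk (0, 1)

/-- The multiplicative set of powers of `x`. -/
noncomputable abbrev S : Submonoid (A R t l) := Submonoid.powers (x R t l)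

lemma xy_eq : x R t l * y R t l = tA R t l ^ l := by
  unfold x y tA
  rw [← map_mul, ← map_pow, ← C_pow, Ideal.Quotient.eq]
  exact Ideal.subset_span rfl

lemma rel1 (i j : ℕ) : tA R t l ^ j • ξ₁ R t l i j = x R t l • ξ₂ R t l i j := by
  unfold ξ₁ ξ₂ E
  rw [← Submodule.Quotient.mk_smul, ← Submodule.Quotient.mk_smul, Submodule.Quotient.eq]
  refine Submodule.subset_span ?_
  left
  simp [Prod.ext_iff]

lemma anni (i j : ℕ) (hij : i + j = l) (b : A R t l)
    (hb : b • ξ₁ R t l i j = 0) : x R t l * b = 0 := by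
  unfold ξ₁ E at hb
  rw [← Submodule.Quotient.mk_smul, Submodule.Quotient.mk_eq_zero] at hb
  rw [Submodule.mem_span_pair] at hb
  obtain ⟨p, q, hpq⟩ := hb
  rw [Prod.ext_iff] at hpq
  obtain ⟨h1, h2⟩ := hpq
  simp only [Prod.smul_fst, Prod.smul_snd, Prod.fst_add, Prod.snd_add, smul_eq_mul,
    mul_one, mul_zero, mul_neg] at h1 h2
  have key : tA R t l ^ i * tA R t l ^ j = x R t l * y R t l := by
    rw [xy_eq, ← pow_add, hij]
  -- h1 : p * tA^j + q * y = b ; h2 : -(p * x) + -(q * tA^i) = 0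
  have : x R t l * b = tA R t l ^ j * (p * x R t l + q * tA R t l ^ i) := by
    linear_combination -(x R t l) * h1 - q * key
  rw [this]
  have : p * x R t l + q * tA R t l ^ i = 0 := by linear_combination -h2
  rw [this, mul_zero]

/-- the localization of `E_{i,j}` at `x` is a free `A[x⁻¹]`-module of
rank one generated by the image of `ξ₁`: the image of `ξ₁` spans, it has trivial
annihilator, and `ξ₂ = t^j ξ₁ / x`. -/
theorem stmt11 (i j : ℕ) (hi : 0 < i) (hj : 0 < j) (hij : i + j = l) :
    (Submodule.span (Localization (S R t l))
        {(LocalizedModule.mkLinearMap (S R t l) (E R t l i j)) (ξ₁ R t l i j)} = ⊤) ∧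
    (∀ c : Localization (S R t l),
      c • (LocalizedModule.mkLinearMap (S R t l) (E R t l i j)) (ξ₁ R t l i j) = 0 →
        c = 0) ∧
    (Localization.mk (tA R t l ^ j) ⟨x R t l, Submonoid.mem_powers _⟩ •
        (LocalizedModule.mkLinearMap (S R t l) (E R t l i j)) (ξ₁ R t l i j)
      = (LocalizedModule.mkLinearMap (S R t l) (E R t l i j)) (ξ₂ R t l i j)) := by
  have h3 : Localization.mk (tA R t l ^ j) ⟨x R t l, Submonoid.mem_powers _⟩ •
        (LocalizedModule.mkLinearMap (S R t l) (E R t l i j)) (ξ₁ R t l i j)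
      = (LocalizedModule.mkLinearMap (S R t l) (E R t l i j)) (ξ₂ R t l i j) := by
    rw [LocalizedModule.mkLinearMap_apply, LocalizedModule.mkLinearMap_apply,
      LocalizedModule.mk_smul_mk, rel1, mul_one]
    exact LocalizedModule.mk_cancel ⟨x R t l, Submonoid.mem_powers _⟩ (ξ₂ R t l i j)
  refine ⟨?_, ?_, h3⟩
  · rw [eq_top_iff]
    rintro z -
    induction z using LocalizedModule.induction_on with
    | h m s =>
      have hz : (LocalizedModule.mk m s : LocalizedModule (S R t l) (E R t l i j)) =
          Localization.mk 1 s • LocalizedModule.mk m 1 := by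
        rw [LocalizedModule.mk_smul_mk, one_smul, mul_one]
      rw [hz]
      refine Submodule.smul_mem _ _ ?_
      have hmk : ∀ m : E R t l i j, (LocalizedModule.mk m 1 :
          LocalizedModule (S R t l) (E R t l i j)) ∈ Submodule.span (Localization (S R t l))
          {(LocalizedModule.mkLinearMap (S R t l) (E R t l i j)) (ξ₁ R t l i j)} := by
        intro m
        induction m using Quotient.inductionOn with
        | h p =>
          have hm : (Quotient.mk _ p : E R t l i j) = p.1 • ξ₁ R t l i j + p.2 • ξ₂ R t l i j := by
            show Submodule.Quotient.mk p = _
            unfold ξ₁ ξ₂ E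
            rw [← Submodule.Quotient.mk_smul, ← Submodule.Quotient.mk_smul,
              ← Submodule.Quotient.mk_add]
            congr 1
            ext <;> simp
          rw [hm, ← LocalizedModule.mkLinearMap_apply, map_add, map_smul, map_smul]
          refine Submodule.add_mem _ (Submodule.smul_of_tower_mem _ _ ?_)
            (Submodule.smul_of_tower_mem _ _ ?_)
          · exact Submodule.mem_span_singleton_self _
          · rw [← h3]
            exact Submodule.smul_mem _ _ (Submodule.mem_span_singleton_self _)
      exact hmk m
  · intro c
    induction c using Localization.induction_on with
    | H y =>
    obtain ⟨a, s⟩ := y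
    intro hc
    rw [LocalizedModule.mkLinearMap_apply, LocalizedModule.mk_smul_mk] at hc
    have h0 : (0 : LocalizedModule (S R t l) (E R t l i j)) = LocalizedModule.mk 0 1 := by
      rw [LocalizedModule.zero_mk]
    rw [h0, LocalizedModule.mk_eq] at hc
    obtain ⟨u, hu⟩ := hc
    simp only [one_smul, smul_zero] at hu
    -- hu : u • a • ξ₁ = 0
    have hb : ((u : A R t l) * a) • ξ₁ R t l i j = 0 := by
      rw [mul_smul]; exact hu
    have hx := anni R t l i j hij _ hb
    rw [Localization.mk_eq_mk', IsLocalization.mk'_eq_zero_iff]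
    refine ⟨⟨x R t l * u, ?_⟩, ?_⟩
    · obtain ⟨n, hn⟩ := u.2
      exact ⟨n + 1, by simp only at hn ⊢; rw [pow_succ, hn, mul_comm]⟩
    · show x R t l * u * a = 0
      rw [mul_assoc]; exact hx


end stmt11
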